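/- For any random variables A, B, C, D, if the conditional mutual information I(B;D|AC) = 0, then I(A;B|C) ≥ I(A;B|CD). -/
import Mathlib


open Finset Real Matrix
open scoped BigOperators Classical

noncomputable section

/-- Probability of an event under a finitely supported probability mass `p`. -/
def pr {Ω : Type*} [Fintype Ω] (p : Ω → ℝ) (E : Ω → Prop) : ℝ :=
  ∑ ω, if E ω then p ω else 0

/-- Distribution (pushforward pmf) of a random variable `A`. -/
def dst {Ω α : Type*} [Fintype Ω] (p : Ω → ℝ) (A : Ω → α) (a : α) : ℝ :=
  pr p (fun ω => A ω = a)

/-- Shannon entropy (base 2). -/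
def ent {Ω α : Type*} [Fintype Ω] [Fintype α] (p : Ω → ℝ) (A : Ω → α) : ℝ :=
  ∑ a, -(dst p A a * Real.logb 2 (dst p A a))

/-- Conditional entropy `H(A|B) = H(A,B) - H(B)`. -/
def condEnt {Ω α β : Type*} [Fintype Ω] [Fintype α] [Fintype β]
    (p : Ω → ℝ) (A : Ω → α) (B : Ω → β) : ℝ :=
  ent p (fun ω => (A ω, B ω)) - ent p B

/-- Conditional mutual information `I(A;B|C) = H(A|C) - H(A|B,C)`. -/
def condMI {Ω α β γ : Type*} [Fintype Ω] [Fintype α] [Fintype β] [Fintype γ]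
    (p : Ω → ℝ) (A : Ω → α) (B : Ω → β) (C : Ω → γ) : ℝ :=
  condEnt p A C - condEnt p A (fun ω => (B ω, C ω))

/-- Min-entropy `H∞(A) = -log₂ max_a Pr[A = a]`. -/
def minEnt {Ω α : Type*} [Fintype Ω] [Fintype α] [Nonempty α] (p : Ω → ℝ) (A : Ω → α) : ℝ :=
  -Real.logb 2 (Finset.univ.sup' Finset.univ_nonempty fun a => dst p A a)

/-- Rényi entropy of order 2: `H₂(A) = -log₂ ∑_a Pr[A=a]²`. -/
def renyi2 {Ω α : Type*} [Fintype Ω] [Fintype α] (p : Ω → ℝ) (A : Ω → α) : ℝ :=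
  -Real.logb 2 (∑ a, (dst p A a) ^ 2)

/-- Average min-entropy `H̃∞(A|B) = -log₂ E_{b∼B}[max_a Pr[A=a | B=b]]`. -/
def avgMinEnt {Ω α β : Type*} [Fintype Ω] [Fintype α] [Nonempty α] [Fintype β]
    (p : Ω → ℝ) (A : Ω → α) (B : Ω → β) : ℝ :=
  -Real.logb 2 (∑ b, dst p B b *
    (Finset.univ.sup' Finset.univ_nonempty fun a =>
      pr p (fun ω => A ω = a ∧ B ω = b) / dst p B b))


lemma mul_log_ratio_ge (u v : ℝ) (hu : 0 < u) (hv : 0 < v) :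
    u - v ≤ u * (Real.log u - Real.log v) := by
  have h := Real.log_le_sub_one_of_pos (div_pos hv hu)
  rw [Real.log_div hv.ne' hu.ne'] at h
  have h2 : u * (v / u) = v := mul_div_cancel₀ v hu.ne'
  nlinarith [h, h2, hu]

set_option maxHeartbeats 1000000 in
lemma gibbs_aux {α β γ : Type*} [Fintype α] [Fintype β] [Fintype γ]
    (q : α × β × γ → ℝ) (h0 : ∀ s, 0 ≤ q s) (h1 : ∑ s, q s = 1) :
    0 ≤ (∑ c, (∑ a, ∑ b, q (a,b,c)) * Real.log (∑ a, ∑ b, q (a,b,c)))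
      + (∑ s, q s * Real.log (q s))
      - (∑ a, ∑ c, (∑ b, q (a,b,c)) * Real.log (∑ b, q (a,b,c)))
      - (∑ b, ∑ c, (∑ a, q (a,b,c)) * Real.log (∑ a, q (a,b,c))) := by
  classical
  set Mxz : α → γ → ℝ := fun a c => ∑ b, q (a,b,c) with hMxz
  set Myz : β → γ → ℝ := fun b c => ∑ a, q (a,b,c) with hMyz
  set Mz : γ → ℝ := fun c => ∑ a, ∑ b, q (a,b,c) with hMz
  have hMxz0 : ∀ a c, 0 ≤ Mxz a c := fun a c => Finset.sum_nonneg fun b _ => h0 _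
  have hMyz0 : ∀ b c, 0 ≤ Myz b c := fun b c => Finset.sum_nonneg fun a _ => h0 _
  have hMz0 : ∀ c, 0 ≤ Mz c := fun c =>
    Finset.sum_nonneg fun a _ => Finset.sum_nonneg fun b _ => h0 _
  have hqMxz : ∀ a b c, q (a,b,c) ≤ Mxz a c := fun a b c =>
    Finset.single_le_sum (fun b _ => h0 (a,b,c)) (Finset.mem_univ b)
  have hqMyz : ∀ a b c, q (a,b,c) ≤ Myz b c := fun a b c =>
    Finset.single_le_sum (fun a _ => h0 (a,b,c)) (Finset.mem_univ a)
  have hMxzMz : ∀ a c, Mxz a c ≤ Mz c := fun a c =>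
    Finset.single_le_sum (fun a _ => hMxz0 a c) (Finset.mem_univ a)
  have hMzMyz : ∀ c, Mz c = ∑ b, Myz b c := fun c => Finset.sum_comm
  -- rewrite each marginal-entropy sum as a sum over triples
  have e1 : (∑ a, ∑ c, Mxz a c * Real.log (Mxz a c))
      = ∑ a, ∑ b, ∑ c, q (a,b,c) * Real.log (Mxz a c) := by
    refine Finset.sum_congr rfl fun a _ => ?_
    calc ∑ c, Mxz a c * Real.log (Mxz a c)
        = ∑ c, ∑ b, q (a,b,c) * Real.log (Mxz a c) :=
          Finset.sum_congr rfl fun c _ => Finset.sum_mul _ _ _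
      _ = ∑ b, ∑ c, q (a,b,c) * Real.log (Mxz a c) := Finset.sum_comm
  have e2 : (∑ b, ∑ c, Myz b c * Real.log (Myz b c))
      = ∑ a, ∑ b, ∑ c, q (a,b,c) * Real.log (Myz b c) := by
    calc ∑ b, ∑ c, Myz b c * Real.log (Myz b c)
        = ∑ b, ∑ c, ∑ a, q (a,b,c) * Real.log (Myz b c) :=
          Finset.sum_congr rfl fun b _ =>
            Finset.sum_congr rfl fun c _ => Finset.sum_mul _ _ _
      _ = ∑ b, ∑ a, ∑ c, q (a,b,c) * Real.log (Myz b c) :=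
          Finset.sum_congr rfl fun b _ => Finset.sum_comm
      _ = ∑ a, ∑ b, ∑ c, q (a,b,c) * Real.log (Myz b c) := Finset.sum_comm
  have e3 : (∑ c, Mz c * Real.log (Mz c))
      = ∑ a, ∑ b, ∑ c, q (a,b,c) * Real.log (Mz c) := by
    calc ∑ c, Mz c * Real.log (Mz c)
        = ∑ c, ∑ a, ∑ b, q (a,b,c) * Real.log (Mz c) :=
          Finset.sum_congr rfl fun c _ => by
            rw [hMz]
            rw [Finset.sum_mul]
            exact Finset.sum_congr rfl fun a _ => Finset.sum_mul _ _ _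
      _ = ∑ a, ∑ c, ∑ b, q (a,b,c) * Real.log (Mz c) := Finset.sum_comm
      _ = ∑ a, ∑ b, ∑ c, q (a,b,c) * Real.log (Mz c) :=
          Finset.sum_congr rfl fun a _ => Finset.sum_comm
  have e4 : (∑ s, q s * Real.log (q s))
      = ∑ a, ∑ b, ∑ c, q (a,b,c) * Real.log (q (a,b,c)) := by
    rw [Fintype.sum_prod_type]
    exact Finset.sum_congr rfl fun a _ => Fintype.sum_prod_type _
  rw [e1, e2, e3, e4]
  -- combine into a single triple sum
  have comb : (∑ a, ∑ b, ∑ c, q (a,b,c) * Real.log (Mz c))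
      + (∑ a, ∑ b, ∑ c, q (a,b,c) * Real.log (q (a,b,c)))
      - (∑ a, ∑ b, ∑ c, q (a,b,c) * Real.log (Mxz a c))
      - (∑ a, ∑ b, ∑ c, q (a,b,c) * Real.log (Myz b c))
      = ∑ a, ∑ b, ∑ c, (q (a,b,c) * Real.log (Mz c) + q (a,b,c) * Real.log (q (a,b,c))
          - q (a,b,c) * Real.log (Mxz a c) - q (a,b,c) * Real.log (Myz b c)) := by
    simp only [Finset.sum_sub_distrib, Finset.sum_add_distrib]
  rw [comb]
  -- per-term key inequality
  have key : ∀ a b c, q (a,b,c) - Mxz a c * Myz b c / Mz c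
      ≤ q (a,b,c) * Real.log (Mz c) + q (a,b,c) * Real.log (q (a,b,c))
        - q (a,b,c) * Real.log (Mxz a c) - q (a,b,c) * Real.log (Myz b c) := by
    intro a b c
    rcases eq_or_lt_of_le (h0 (a,b,c)) with hq | hq
    · rw [← hq]
      simp only [zero_mul, mul_zero, sub_zero, add_zero, zero_sub, zero_add, neg_zero, zero_mul]
      have : 0 ≤ Mxz a c * Myz b c / Mz c :=
        div_nonneg (mul_nonneg (hMxz0 a c) (hMyz0 b c)) (hMz0 c)
      linarith
    · have hA : 0 < Mxz a c := lt_of_lt_of_le hq (hqMxz a b c)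
      have hB : 0 < Myz b c := lt_of_lt_of_le hq (hqMyz a b c)
      have hZ : 0 < Mz c := lt_of_lt_of_le hA (hMxzMz a c)
      have hvpos : 0 < Mxz a c * Myz b c / Mz c := div_pos (mul_pos hA hB) hZ
      have hlog : Real.log (Mxz a c * Myz b c / Mz c)
          = Real.log (Mxz a c) + Real.log (Myz b c) - Real.log (Mz c) := by
        rw [Real.log_div (mul_pos hA hB).ne' hZ.ne', Real.log_mul hA.ne' hB.ne']
      have h2 := mul_log_ratio_ge (q (a,b,c)) (Mxz a c * Myz b c / Mz c) hq hvpos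
      rw [hlog] at h2
      nlinarith [h2]
  -- lower bound for the sum of (q - v)
  have hvc : ∀ c, (∑ a, ∑ b, Mxz a c * Myz b c / Mz c) ≤ Mz c := by
    intro c
    rcases eq_or_lt_of_le (hMz0 c) with hz | hz
    · have hx : ∀ a, Mxz a c = 0 := fun a =>
        le_antisymm (hz ▸ hMxzMz a c) (hMxz0 a c)
      simp [hx]
      exact hMz0 c
    · have step : ∀ a, (∑ b, Mxz a c * Myz b c / Mz c) = Mxz a c * Mz c / Mz c := by
        intro a
        rw [← Finset.sum_div, ← Finset.mul_sum, ← hMzMyz c]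
      calc (∑ a, ∑ b, Mxz a c * Myz b c / Mz c)
          = ∑ a, Mxz a c * Mz c / Mz c := Finset.sum_congr rfl fun a _ => step a
        _ = (∑ a, Mxz a c) * Mz c / Mz c := by rw [← Finset.sum_div, ← Finset.sum_mul]
        _ = Mz c * Mz c / Mz c := by rw [show (∑ a, Mxz a c) = Mz c from rfl]
        _ = Mz c := by rw [mul_div_assoc, div_self hz.ne', mul_one]
        _ ≤ Mz c := le_rfl
  have hsumq : (∑ a, ∑ b, ∑ c, q (a,b,c)) = 1 := by
    rw [← h1, Fintype.sum_prod_type]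
    refine Finset.sum_congr rfl fun a _ => ?_
    exact (Fintype.sum_prod_type (f := fun s => q (a, s))).symm
  have hsumv : (∑ a, ∑ b, ∑ c, Mxz a c * Myz b c / Mz c) ≤ 1 := by
    have hre : (∑ a, ∑ b, ∑ c, Mxz a c * Myz b c / Mz c)
        = ∑ c, ∑ a, ∑ b, Mxz a c * Myz b c / Mz c :=
      calc (∑ a, ∑ b, ∑ c, Mxz a c * Myz b c / Mz c)
          = ∑ a, ∑ c, ∑ b, Mxz a c * Myz b c / Mz c :=
            Finset.sum_congr rfl fun a _ => Finset.sum_comm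
        _ = ∑ c, ∑ a, ∑ b, Mxz a c * Myz b c / Mz c := Finset.sum_comm
    have h2 : (∑ c, Mz c) = 1 :=
      calc (∑ c, Mz c) = ∑ c, ∑ a, ∑ b, q (a,b,c) := rfl
        _ = ∑ a, ∑ c, ∑ b, q (a,b,c) := Finset.sum_comm
        _ = ∑ a, ∑ b, ∑ c, q (a,b,c) := Finset.sum_congr rfl fun a _ => Finset.sum_comm
        _ = 1 := hsumq
    rw [hre]
    exact le_trans (Finset.sum_le_sum fun c _ => hvc c) (le_of_eq h2)
  calc (0:ℝ) ≤ ∑ a, ∑ b, ∑ c, (q (a,b,c) - Mxz a c * Myz b c / Mz c) := by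
        simp only [Finset.sum_sub_distrib]
        rw [hsumq]
        linarith [hsumv]
    _ ≤ _ := by
        refine Finset.sum_le_sum fun a _ => Finset.sum_le_sum fun b _ =>
          Finset.sum_le_sum fun c _ => key a b c

section helpers
variable {Ω : Type*} [Fintype Ω] (p : Ω → ℝ)

lemma pr_nonneg (hp : ∀ ω, 0 ≤ p ω) (E : Ω → Prop) : 0 ≤ pr p E := by
  apply Finset.sum_nonneg
  intro ω _
  split
  · exact hp ω
  · exact le_rfl

lemma pr_congr {E F : Ω → Prop} (h : ∀ ω, E ω ↔ F ω) : pr p E = pr p F := by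
  unfold pr
  exact Finset.sum_congr rfl fun ω _ => if_congr (h ω) rfl rfl

lemma pr_sum {κ : Type*} [Fintype κ] (E : Ω → Prop) (f : Ω → κ) :
    pr p E = ∑ k, pr p (fun ω => E ω ∧ f ω = k) := by
  unfold pr
  rw [Finset.sum_comm]
  refine Finset.sum_congr rfl fun ω _ => ?_
  by_cases hE : E ω <;> simp [hE, Finset.sum_ite_eq']

lemma dst_nonneg (hp : ∀ ω, 0 ≤ p ω) {α : Type*} (T : Ω → α) (a : α) : 0 ≤ dst p T a :=
  pr_nonneg p hp _

lemma dst_sum (hp1 : ∑ ω, p ω = 1) {α : Type*} [Fintype α] (T : Ω → α) :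
    ∑ a, dst p T a = 1 := by
  unfold dst pr
  rw [Finset.sum_comm]
  rw [← hp1]
  exact Finset.sum_congr rfl fun ω _ => by simp [Finset.sum_ite_eq']

lemma dst_map {α α' : Type*} (e : α ≃ α') (T : Ω → α) (a' : α') :
    dst p (fun ω => e (T ω)) a' = dst p T (e.symm a') := by
  unfold dst
  exact pr_congr p fun ω => e.apply_eq_iff_eq_symm_apply

lemma ent_map {α α' : Type*} [Fintype α] [Fintype α'] (e : α ≃ α') (T : Ω → α) :
    ent p (fun ω => e (T ω)) = ent p T := by
  unfold ent
  exact Fintype.sum_equiv e.symm _ _ fun a' => by rw [dst_map]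

lemma ent_map' {α α' : Type*} [Fintype α] [Fintype α'] (e : α ≃ α') (T : Ω → α)
    (T' : Ω → α') (hT : ∀ ω, T' ω = e (T ω)) : ent p T' = ent p T := by
  have : T' = fun ω => e (T ω) := funext hT
  rw [this, ent_map]

lemma ent_eq_log {κ : Type*} [Fintype κ] (T : Ω → κ) :
    ent p T = -(∑ k, dst p T k * Real.log (dst p T k)) / Real.log 2 := by
  unfold ent
  simp only [Real.logb, ← mul_div_assoc, ← neg_div]
  rw [← Finset.sum_div, ← Finset.sum_neg_distrib]

lemma dst_marg_xz {α β γ : Type*} [Fintype β] (X : Ω → α) (Y : Ω → β) (Z : Ω → γ)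
    (a : α) (c : γ) :
    dst p (fun ω => (X ω, Z ω)) (a, c)
      = ∑ b, dst p (fun ω => (X ω, Y ω, Z ω)) (a, b, c) := by
  unfold dst
  rw [pr_sum p _ Y]
  refine Finset.sum_congr rfl fun b _ => pr_congr p fun ω => ?_
  simp only [Prod.mk.injEq]
  tauto

lemma dst_marg_yz {α β γ : Type*} [Fintype α] (X : Ω → α) (Y : Ω → β) (Z : Ω → γ)
    (b : β) (c : γ) :
    dst p (fun ω => (Y ω, Z ω)) (b, c)
      = ∑ a, dst p (fun ω => (X ω, Y ω, Z ω)) (a, b, c) := by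
  unfold dst
  rw [pr_sum p _ X]
  refine Finset.sum_congr rfl fun a _ => pr_congr p fun ω => ?_
  simp only [Prod.mk.injEq]
  tauto

lemma dst_marg_z {α β γ : Type*} [Fintype α] [Fintype β] (X : Ω → α) (Y : Ω → β) (Z : Ω → γ)
    (c : γ) :
    dst p Z c = ∑ a, ∑ b, dst p (fun ω => (X ω, Y ω, Z ω)) (a, b, c) := by
  unfold dst
  rw [pr_sum p _ X]
  refine Finset.sum_congr rfl fun a _ => ?_
  rw [pr_sum p _ Y]
  refine Finset.sum_congr rfl fun b _ => pr_congr p fun ω => ?_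
  simp only [Prod.mk.injEq]
  tauto

end helpers

lemma aux_div (L A B C D : ℝ) (hL : 0 < L) (h : 0 ≤ B + C - A - D) :
    0 ≤ -A / L - -B / L - (-C / L - -D / L) := by
  have hEq : -A / L - -B / L - (-C / L - -D / L) = (B + C - A - D) / L := by ring
  rw [hEq]
  exact div_nonneg h hL.le

lemma condMI_nonneg {Ω α β γ : Type*} [Fintype Ω] [Fintype α] [Fintype β] [Fintype γ]
    (p : Ω → ℝ) (hp : ∀ ω, 0 ≤ p ω) (hp1 : ∑ ω, p ω = 1)
    (X : Ω → α) (Y : Ω → β) (Z : Ω → γ) : 0 ≤ condMI p X Y Z := by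
  have h0 : ∀ s, 0 ≤ dst p (fun ω => (X ω, Y ω, Z ω)) s :=
    fun s => dst_nonneg p hp _ s
  have h1 := dst_sum p hp1 (fun ω => (X ω, Y ω, Z ω))
  have G := gibbs_aux (dst p (fun ω => (X ω, Y ω, Z ω))) h0 h1
  have hL : 0 < Real.log 2 := Real.log_pos one_lt_two
  have hxz : (∑ s : α × γ, dst p (fun ω => (X ω, Z ω)) s
        * Real.log (dst p (fun ω => (X ω, Z ω)) s))
      = ∑ a, ∑ c, (∑ b, dst p (fun ω => (X ω, Y ω, Z ω)) (a,b,c))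
        * Real.log (∑ b, dst p (fun ω => (X ω, Y ω, Z ω)) (a,b,c)) := by
    rw [Fintype.sum_prod_type]
    exact Finset.sum_congr rfl fun a _ => Finset.sum_congr rfl fun c _ => by
      rw [dst_marg_xz p X Y Z a c]
  have hyz : (∑ s : β × γ, dst p (fun ω => (Y ω, Z ω)) s
        * Real.log (dst p (fun ω => (Y ω, Z ω)) s))
      = ∑ b, ∑ c, (∑ a, dst p (fun ω => (X ω, Y ω, Z ω)) (a,b,c))
        * Real.log (∑ a, dst p (fun ω => (X ω, Y ω, Z ω)) (a,b,c)) := by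
    rw [Fintype.sum_prod_type]
    exact Finset.sum_congr rfl fun b _ => Finset.sum_congr rfl fun c _ => by
      rw [dst_marg_yz p X Y Z b c]
  have hz : (∑ c, dst p Z c * Real.log (dst p Z c))
      = ∑ c, (∑ a, ∑ b, dst p (fun ω => (X ω, Y ω, Z ω)) (a,b,c))
        * Real.log (∑ a, ∑ b, dst p (fun ω => (X ω, Y ω, Z ω)) (a,b,c)) := by
    exact Finset.sum_congr rfl fun c _ => by rw [dst_marg_z p X Y Z c]
  simp only [condMI, condEnt]
  rw [ent_eq_log p (fun ω => (X ω, Z ω)), ent_eq_log p Z,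
      ent_eq_log p (fun ω => (X ω, Y ω, Z ω)), ent_eq_log p (fun ω => (Y ω, Z ω))]
  apply aux_div _ _ _ _ _ hL
  rw [hxz, hyz, hz]
  exact G

set_option maxHeartbeats 1000000 in
/-- If I(B;D|A,C) = 0 then I(A;B|C) ≥ I(A;B|C,D). -/
theorem stmt_1 {Ω α β γ δ : Type*} [Fintype Ω] [Fintype α] [Fintype β] [Fintype γ] [Fintype δ]
    (p : Ω → ℝ) (hp : ∀ ω, 0 ≤ p ω) (hp1 : ∑ ω, p ω = 1)
    (A : Ω → α) (B : Ω → β) (C : Ω → γ) (D : Ω → δ)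
    (h : condMI p B D (fun ω => (A ω, C ω)) = 0) :
    condMI p A B C ≥ condMI p A B (fun ω => (C ω, D ω)) := by
  have hnn : 0 ≤ condMI p B D C := condMI_nonneg p hp hp1 B D C
  have e1 : ent p (fun ω => (B ω, D ω, C ω)) = ent p (fun ω => (B ω, C ω, D ω)) :=
    ent_map' p ⟨fun s => (s.1, s.2.2, s.2.1), fun s => (s.1, s.2.2, s.2.1),
      fun s => rfl, fun s => rfl⟩ (fun ω => (B ω, C ω, D ω)) _ (fun ω => rfl)
  have e2 : ent p (fun ω => (D ω, C ω)) = ent p (fun ω => (C ω, D ω)) :=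
    ent_map' p ⟨fun s => (s.2, s.1), fun s => (s.2, s.1),
      fun s => rfl, fun s => rfl⟩ (fun ω => (C ω, D ω)) _ (fun ω => rfl)
  have e3 : ent p (fun ω => (B ω, A ω, C ω)) = ent p (fun ω => (A ω, B ω, C ω)) :=
    ent_map' p ⟨fun s => (s.2.1, s.1, s.2.2), fun s => (s.2.1, s.1, s.2.2),
      fun s => rfl, fun s => rfl⟩ (fun ω => (A ω, B ω, C ω)) _ (fun ω => rfl)
  have e4 : ent p (fun ω => (B ω, D ω, A ω, C ω)) = ent p (fun ω => (A ω, B ω, C ω, D ω)) :=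
    ent_map' p ⟨fun s => (s.2.1, s.2.2.2, s.1, s.2.2.1),
      fun s => (s.2.2.1, s.1, s.2.2.2, s.2.1),
      fun s => rfl, fun s => rfl⟩ (fun ω => (A ω, B ω, C ω, D ω)) _ (fun ω => rfl)
  have e5 : ent p (fun ω => (D ω, A ω, C ω)) = ent p (fun ω => (A ω, C ω, D ω)) :=
    ent_map' p ⟨fun s => (s.2.2, s.1, s.2.1), fun s => (s.2.1, s.2.2, s.1),
      fun s => rfl, fun s => rfl⟩ (fun ω => (A ω, C ω, D ω)) _ (fun ω => rfl)
  have key : condMI p A B C - condMI p A B (fun ω => (C ω, D ω))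
      = condMI p B D C - condMI p B D (fun ω => (A ω, C ω)) := by
    simp only [condMI, condEnt]
    rw [e1, e2, e3, e4, e5]
    ring
  linarith [hnn, key, h]
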